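/- Let n ≥ 1 and f ≥ 0 be natural numbers, let L₁,…,L_f be i.i.d. random literals uniformly distributed on ±[n], and for v ∈ [n] set N_v = |{j ∈ [f] : |L_j| = v}|. Then P(there is no pair j, j′ ∈ [f] with L_j = −L_{j′}, and N_v ≤ 2 for all v ∈ [n]) = Σ_{k=0}^{⌊f/2⌋} binom(n−k, f−2k)·binom(n, k)·f!/(4^k·n^f). -/

import Mathlib

open Filter Topology
open scoped ENNReal

namespace RandomSAT

/-- Data of a random `k`-clause on `n` variables: a sequence of `k` pairwise distinct
variables together with `k` signs. -/
def ClauseData (n k : ℕ) : Type :=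
  {p : (Fin k → Fin n) × (Fin k → Bool) // Function.Injective p.1}

instance (n k : ℕ) : Fintype (ClauseData n k) := by
  unfold ClauseData; infer_instance

instance (n k : ℕ) : DecidableEq (ClauseData n k) := by
  unfold ClauseData; infer_instance

/-- The `i`-th literal of a clause, as a nonzero integer in `±[n]`
(`σ_i · v_i`, variables being `1,…,n`). -/
def lit {n k : ℕ} (c : ClauseData n k) (i : Fin k) : ℤ :=
  (if c.1.2 i then 1 else -1) * ((c.1.1 i : ℤ) + 1)

/-- Clause satisfaction at an assignment `x : ℤ → Bool` (`true` = 1, `false` = -1):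
some literal of the clause is satisfied, i.e. `σ_i · x_{v_i} = 1` for some `i`. -/
def ClauseSat {n k : ℕ} (c : ClauseData n k) (x : ℤ → Bool) : Prop :=
  ∃ i, x ((c.1.1 i : ℤ) + 1) = c.1.2 i

/-- The set `±[n] = {-n,…,-1,1,…,n}` of literals. -/
noncomputable def pm (n : ℕ) : Finset ℤ := (Finset.Icc (-(n : ℤ)) (n : ℤ)).erase 0

/-- A set of literals is consistent if it contains at most one of `v`, `-v` for each `v`. -/
def Consistent (L : Finset ℤ) : Prop := ∀ l ∈ L, -l ∉ L

/-- `x` fixes the variables dictated by `L`: `x_{|l|} = sgn l` for every `l ∈ L`. -/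
def Fixes (L : Finset ℤ) (x : ℤ → Bool) : Prop :=
  ∀ l ∈ L, x |l| = decide (0 < l)

/-- A `k`-CNF formula with `m` clauses on `n` variables (an outcome of the random formula:
the joint distribution of the i.i.d. uniform clauses is uniform on this space). -/
abbrev CNF (n m k : ℕ) := Fin m → ClauseData n k

/-- `φ(x) = 1`: all clauses are satisfied at `x`. -/
def CNFSat {n m k : ℕ} (φ : CNF n m k) (x : ℤ → Bool) : Prop :=
  ∀ j, ClauseSat (φ j) x

/-- `φ_L ∈ SAT`: some assignment fixing the variables dictated by `L` satisfies `φ`. -/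
def SATFixed {n m k : ℕ} (L : Finset ℤ) (φ : CNF n m k) : Prop :=
  ∃ x, Fixes L x ∧ CNFSat φ x

/-- Probability of an event under the uniform distribution on a finite sample space. -/
noncomputable def prob {Ω : Type*} [Fintype Ω] (A : Set Ω) : ℝ :=
  (Nat.card A : ℝ) / (Fintype.card Ω : ℝ)


-- auxiliary section to splice before the theorem
section Aux

open Finset

/-- helper: double-xor cancels -/
private lemma xor_xor_cancel (a b : Bool) : xor (xor a b) b = a := by
  cases a <;> cases b <;> rfl

private lemma bool_ne_forced {a b : Bool} (h : a ≠ b) : b = !a := by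
  cases a <;> cases b <;> simp_all

lemma lit_neg_iff {n : ℕ} (c c' : ClauseData n 1) :
    lit c 0 = -(lit c' 0) ↔ c.1.1 0 = c'.1.1 0 ∧ c.1.2 0 = !c'.1.2 0 := by
  unfold lit
  have h1 : ((c.1.1 0 : ℤ) = (c'.1.1 0 : ℤ)) ↔ c.1.1 0 = c'.1.1 0 :=
    ⟨fun h => Fin.ext (by exact_mod_cast h), fun h => by rw [h]⟩
  have h2 : (0:ℤ) ≤ (c.1.1 0 : ℤ) := by positivity
  have h3 : (0:ℤ) ≤ (c'.1.1 0 : ℤ) := by positivity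
  rcases hb : c.1.2 0 <;> rcases hb' : c'.1.2 0 <;> simp [← h1] <;> omega

lemma abs_lit_eq_iff {n : ℕ} (c : ClauseData n 1) (v : Fin n) :
    |lit c 0| = (v : ℤ) + 1 ↔ c.1.1 0 = v := by
  unfold lit
  have h1 : ((c.1.1 0 : ℤ) = (v : ℤ)) ↔ c.1.1 0 = v :=
    ⟨fun h => Fin.ext (by exact_mod_cast h), fun h => by rw [h]⟩
  have h2 : (0:ℤ) ≤ (c.1.1 0 : ℤ) := by positivity
  have habs : |(if c.1.2 0 then 1 else -1 : ℤ) * ((c.1.1 0 : ℤ)+1)| = (c.1.1 0 : ℤ) + 1 := by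
    have h3 : (0:ℤ) ≤ (c.1.1 0 : ℤ)+1 := by omega
    rcases c.1.2 0
    · simp only [Bool.false_eq_true, if_false, neg_one_mul, abs_neg]
      rw [abs_of_nonneg h3]
    · simp only [if_true, one_mul]
      rw [abs_of_nonneg h3]
  rw [habs, ← h1]
  omega

variable {n f : ℕ}

/-- second occurrence indicator -/
def sec (h : Fin f → Fin n) (j : Fin f) : Bool := decide (∃ j', j' < j ∧ h j' = h j)

def vr (ω : Fin f → ClauseData n 1) (j : Fin f) : Fin n := (ω j).1.1 0
def sg (ω : Fin f → ClauseData n 1) (j : Fin f) : Bool := (ω j).1.2 0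

def Ev (n f : ℕ) : Set (Fin f → ClauseData n 1) :=
  {ω | (∀ j j' : Fin f, lit (ω j) 0 ≠ -(lit (ω j') 0)) ∧
        (∀ v : Fin n,
          (Finset.univ.filter (fun j => |lit (ω j) 0| = (v : ℤ) + 1)).card ≤ 2)}

lemma mem_Ev_iff (ω : Fin f → ClauseData n 1) :
    ω ∈ Ev n f ↔ (∀ j j' : Fin f, vr ω j = vr ω j' → sg ω j = sg ω j') ∧
      (∀ v : Fin n, (Finset.univ.filter (fun j => vr ω j = v)).card ≤ 2) := by
  unfold Ev
  simp only [Set.mem_setOf_eq]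
  constructor
  · rintro ⟨h1, h2⟩
    constructor
    · intro j j' hv
      by_contra hs
      exact h1 j j' ((lit_neg_iff _ _).2 ⟨hv, by rcases hb : sg ω j <;> rcases hb' : sg ω j' <;>
        simp_all [vr, sg]⟩)
    · intro v
      refine le_trans (le_of_eq (congrArg Finset.card ?_)) (h2 v)
      apply Finset.filter_congr
      intro j _
      simp [abs_lit_eq_iff (ω j) v, vr]
  · rintro ⟨h1, h2⟩
    constructor
    · intro j j' hc
      rw [lit_neg_iff] at hc
      have hss := h1 j j' hc.1
      simp only [sg] at hss
      rw [hc.2] at hss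
      simp at hss
    · intro v
      refine le_trans (le_of_eq (congrArg Finset.card ?_)) (h2 v)
      apply Finset.filter_congr
      intro j _
      simp [abs_lit_eq_iff (ω j) v, vr]

/-- three distinct elements with the same value contradict fiber card ≤ 2 -/
lemma three_distinct {h : Fin f → Fin n}
    (hcard : ∀ v : Fin n, (Finset.univ.filter (fun j => h j = v)).card ≤ 2)
    {a b c : Fin f} (hab : a ≠ b) (hac : a ≠ c) (hbc : b ≠ c)
    (h1 : h a = h b) (h2 : h a = h c) : False := by
  have hsub : ({a, b, c} : Finset (Fin f)) ⊆ Finset.univ.filter (fun j => h j = h a) := by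
    intro x hx
    simp only [Finset.mem_insert, Finset.mem_singleton] at hx
    rcases hx with rfl | rfl | rfl <;> simp [h1.symm, h2.symm]
  have h3 : ({a, b, c} : Finset (Fin f)).card = 3 := by
    rw [Finset.card_insert_of_notMem (by simp [hab, hac]),
      Finset.card_insert_of_notMem (by simp [hbc]), Finset.card_singleton]
  have := Finset.card_le_card hsub
  rw [h3] at this
  exact absurd (le_trans this (hcard (h a))) (by norm_num)

/-- fibers of the variable map of an embedding have at most 2 elements -/
lemma emb_fiber_le (g : Fin f ↪ Fin n × Bool) (v : Fin n) :
    (Finset.univ.filter (fun j => (g j).1 = v)).card ≤ 2 := by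
  have h : (Finset.univ.filter (fun j => (g j).1 = v)).card ≤ (Finset.univ : Finset Bool).card := by
    apply Finset.card_le_card_of_injOn (fun j => (g j).2)
    · intro a _; exact Finset.mem_univ _
    · intro a ha b hb hab
      simp only [Finset.coe_filter, Set.mem_setOf_eq] at ha hb
      apply g.injective
      exact Prod.ext (ha.2.trans hb.2.symm) hab
  simpa using h

lemma pair_sign (g : Fin f ↪ Fin n × Bool) {j j' : Fin f} (hlt : j < j')
    (hv : (g j).1 = (g j').1) :
    xor ((g j).2) (sec (fun i => (g i).1) j) = xor ((g j').2) (sec (fun i => (g i).1) j') := by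
  have hs2 : sec (fun i => (g i).1) j' = true := by
    simp only [sec, decide_eq_true_eq]
    exact ⟨j, hlt, hv⟩
  have hs1 : sec (fun i => (g i).1) j = false := by
    rw [Bool.eq_false_iff]
    simp only [sec, ne_eq, decide_eq_true_eq, not_exists, not_and]
    intro j'' hj'' hvv
    by_contra _
    exact three_distinct (emb_fiber_le g) (ne_of_lt hj'') (ne_of_lt (hj''.trans hlt))
      (ne_of_lt hlt) hvv (hvv.trans hv)
  have hne : (g j).2 ≠ (g j').2 := by
    intro hh
    exact absurd (g.injective (Prod.ext hv hh)) (ne_of_lt hlt)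
  rw [hs1, hs2, bool_ne_forced hne]
  cases (g j).2 <;> rfl

noncomputable def evEquiv (n f : ℕ) : (Ev n f) ≃ (Fin f ↪ Fin n × Bool) where
  toFun ω := ⟨fun j => (vr ω.1 j, xor (sg ω.1 j) (sec (vr ω.1) j)), by
    obtain ⟨hs, hc⟩ := (mem_Ev_iff ω.1).1 ω.2
    intro j j' hjj
    simp only [Prod.mk.injEq] at hjj
    obtain ⟨hv, hx⟩ := hjj
    have hsg : sg ω.1 j = sg ω.1 j' := hs j j' hv
    rw [hsg] at hx
    have hsec : sec (vr ω.1) j = sec (vr ω.1) j' := by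
      rcases hb : sg ω.1 j' <;> rw [hb] at hx <;> simpa using hx
    by_contra hne
    rcases lt_trichotomy j j' with hlt | heq | hlt
    · have hs2 : sec (vr ω.1) j' = true := by
        simp only [sec, decide_eq_true_eq]
        exact ⟨j, hlt, hv⟩
      rw [hs2] at hsec
      simp only [sec, decide_eq_true_eq] at hsec
      obtain ⟨j'', hj''⟩ := hsec
      exact three_distinct hc (ne_of_lt hj''.1) (ne_of_lt (hj''.1.trans hlt)) hne
        hj''.2 (hj''.2.trans hv)
    · exact hne heq
    · have hs2 : sec (vr ω.1) j = true := by
        simp only [sec, decide_eq_true_eq]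
        exact ⟨j', hlt, hv.symm⟩
      rw [hs2] at hsec
      have hsec' := hsec.symm
      simp only [sec, decide_eq_true_eq] at hsec'
      obtain ⟨j'', hj''⟩ := hsec'
      exact three_distinct hc (ne_of_lt hj''.1) (ne_of_lt (hj''.1.trans hlt)) (Ne.symm hne)
        hj''.2 (hj''.2.trans hv.symm)⟩
  invFun g := ⟨fun j => ⟨(fun _ => (g j).1, fun _ => xor ((g j).2) (sec (fun i => (g i).1) j)),
      Function.injective_of_subsingleton _⟩, by
    refine (mem_Ev_iff _).2 ?_
    refine ⟨?_, fun v => emb_fiber_le g v⟩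
    intro j j' hv
    simp only [vr] at hv
    simp only [sg]
    rcases lt_trichotomy j j' with hlt | heq | hlt
    · exact pair_sign g hlt hv
    · rw [heq]
    · exact (pair_sign g hlt hv.symm).symm⟩
  left_inv := by
    rintro ⟨ω, hω⟩
    apply Subtype.ext
    funext j
    apply Subtype.ext
    apply Prod.ext
    · funext i
      have hi : i = 0 := Subsingleton.elim i 0
      subst hi
      rfl
    · funext i
      have hi : i = 0 := Subsingleton.elim i 0
      subst hi
      exact xor_xor_cancel _ _
  right_inv := by
    intro g
    apply Function.Embedding.ext
    intro j
    apply Prod.ext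
    · rfl
    · exact xor_xor_cancel _ _

def S (n f : ℕ) : ℕ := ∑ k ∈ range (f/2+1), n.choose k * (n-k).choose (f-2*k) * 2^(f-2*k)

lemma S_zero (f : ℕ) : S 0 f = Nat.choose 0 f := by
  unfold S
  rcases f with _ | f
  · simp
  · rw [Nat.choose_zero_succ]
    apply Finset.sum_eq_zero
    intro k hk
    rcases k with _ | k
    · simp
    · simp [Nat.choose_zero_succ]

lemma S_key (n m : ℕ) : S (n+1) (m+2) = S n m + (S n (m+2) + 2 * S n (m+1)) := by
  have hrange : (m+2)/2 + 1 = m/2 + 2 := by omega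
  have hL : S (n+1) (m+2)
      = S n m + ∑ k ∈ range (m/2+2), n.choose k * (n+1-k).choose (m+2-2*k) * 2^(m+2-2*k) := by
    unfold S
    rw [hrange, Finset.sum_range_succ' _ (m/2+1), Finset.sum_range_succ' (fun k => n.choose k * (n+1-k).choose (m+2-2*k) * 2^(m+2-2*k)) (m/2+1)]
    have h1 : ∀ k, (n+1).choose (k+1) * ((n+1)-(k+1)).choose (m+2-2*(k+1)) * 2^(m+2-2*(k+1))
        = n.choose k * (n-k).choose (m-2*k) * 2^(m-2*k)
          + n.choose (k+1) * ((n+1)-(k+1)).choose (m+2-2*(k+1)) * 2^(m+2-2*(k+1)) := by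
      intro k
      have e1 : (n+1)-(k+1) = n - k := by omega
      have e2 : m+2-2*(k+1) = m - 2*k := by omega
      rw [e1, e2, Nat.choose_succ_succ', add_mul, add_mul]
    simp only [h1]
    rw [Finset.sum_add_distrib]
    have e3 : ∀ k:ℕ, (n+1)-(k+1) = n - k := by omega
    have e4 : ∀ k:ℕ, m+2-2*(k+1) = m - 2*k := by omega
    simp only [e3, e4]
    simp [Nat.choose_zero_right]
    ring
  rw [hL]
  congr 1
  have hterm : ∀ k ∈ range (m/2+2),
      n.choose k * (n+1-k).choose (m+2-2*k) * 2^(m+2-2*k)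
      = n.choose k * (n-k).choose (m+2-2*k) * 2^(m+2-2*k)
        + 2 * (if k ∈ range ((m+1)/2+1) then n.choose k * (n-k).choose (m+1-2*k) * 2^(m+1-2*k) else 0) := by
    intro k hk
    simp only [Finset.mem_range] at hk ⊢
    by_cases hkn : k ≤ n
    · by_cases h2k : 2*k ≤ m+1
      · have hg : k < (m+1)/2 + 1 := by omega
        rw [if_pos hg]
        have e1 : n + 1 - k = (n - k) + 1 := by omega
        have e2 : m + 2 - 2*k = (m + 1 - 2*k) + 1 := by omega
        rw [e1, e2, Nat.choose_succ_succ', pow_succ]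
        ring
      · have h2 : m + 2 - 2*k = 0 := by omega
        have hg : ¬ (k < (m+1)/2 + 1) := by omega
        rw [if_neg hg, h2]
        simp
    · have : n.choose k = 0 := Nat.choose_eq_zero_of_lt (by omega)
      simp [this]
  rw [Finset.sum_congr rfl hterm, Finset.sum_add_distrib]
  congr 1
  · unfold S
    rw [hrange]
  · rw [← Finset.mul_sum]
    congr 1
    unfold S
    rw [Finset.sum_ite_mem, Finset.inter_eq_right.mpr (by
      intro x hx; simp only [Finset.mem_range] at *; omega)]

theorem two_mul_choose_eq_S (n f : ℕ) : (2*n).choose f = S n f := by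
  induction n generalizing f with
  | zero => simpa using (S_zero f).symm
  | succ n ih =>
    rcases f with _ | _ | m
    · simp [S]
    · simp [S]
      omega
    · have h2 : 2*(n+1) = (2*n+1)+1 := by ring
      rw [h2, Nat.choose_succ_succ', Nat.choose_succ_succ, Nat.choose_succ_succ,
        S_key n m, ih m, ih (m+1), ih (m+2)]
      ring

lemma card_clauseData (n : ℕ) : Fintype.card (ClauseData n 1) = 2 * n := by
  have e : ClauseData n 1 ≃ ((Fin 1 → Fin n) × (Fin 1 → Bool)) :=
    Equiv.subtypeUnivEquiv (fun p => Function.injective_of_subsingleton _)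
  rw [Fintype.card_congr e]
  simp [mul_comm]

end Aux


/-- Exact probability that `f` i.i.d. uniform random literals on `±[n]` contain
no contradicting pair and no variable appears more than twice. -/
theorem prob_1SAT_no_triple
    (n f : ℕ) (hn : 1 ≤ n) :
    prob {ω : Fin f → ClauseData n 1 |
        (∀ j j' : Fin f, lit (ω j) 0 ≠ -(lit (ω j') 0)) ∧
        (∀ v : Fin n,
          (Finset.univ.filter (fun j => |lit (ω j) 0| = (v : ℤ) + 1)).card ≤ 2)}
    = ∑ k ∈ Finset.range (f / 2 + 1),
        ((n - k).choose (f - 2 * k) : ℝ) * (n.choose k : ℝ) * (f.factorial : ℝ) /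
          (4 ^ k * (n : ℝ) ^ f) := by
  have hcard : Nat.card (Ev n f) = f.factorial * (2*n).choose f := by
    rw [Nat.card_congr (evEquiv n f), Nat.card_eq_fintype_card, Fintype.card_embedding_eq,
      Fintype.card_prod, Fintype.card_fin, Fintype.card_bool, Fintype.card_fin]
    rw [Nat.descFactorial_eq_factorial_mul_choose]
    ring_nf
  have hΩ : Fintype.card (Fin f → ClauseData n 1) = (2*n)^f := by
    rw [Fintype.card_fun, card_clauseData, Fintype.card_fin]
  show prob (Ev n f) = _
  unfold prob
  rw [hcard, hΩ, two_mul_choose_eq_S]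
  unfold S
  push_cast
  rw [Finset.mul_sum, Finset.sum_div]
  apply Finset.sum_congr rfl
  intro k hk
  simp only [Finset.mem_range] at hk
  have h2k : 2*k ≤ f := by omega
  have hn0 : (n:ℝ) ≠ 0 := by positivity
  have hpow : (2:ℝ)^(f-2*k) * 4^k = 2^f := by
    rw [(by norm_num : (4:ℝ) = 2^2), ← pow_mul, ← pow_add]
    congr 1
    omega
  have hden1 : ((2:ℝ)*n)^f ≠ 0 := by positivity
  have hden2 : (4:ℝ)^k * (n:ℝ)^f ≠ 0 := by positivity
  rw [div_eq_div_iff hden1 hden2, mul_pow]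
  linear_combination ((f.factorial : ℝ) * (n.choose k : ℝ) * ((n-k).choose (f-2*k) : ℝ)
    * (n:ℝ)^f) * hpow

end RandomSAT
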